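/- Let A and B be n×n complex positive semidefinite matrices and let C be an m×m complex positive semidefinite matrix. Then √(√(A ⊗ C) · (B ⊗ C) · √(A ⊗ C)) = √(√A · B · √A) ⊗ C, where ⊗ denotes the Kronecker product of matrices and √ denotes the positive semidefinite square root. -/

import Mathlib

open Matrix
open scoped Kronecker
open scoped ComplexOrder

namespace Matrix.PosSemidef

variable {n 𝕜 : Type*} [Fintype n] [RCLike 𝕜] [DecidableEq n] {A : Matrix n n 𝕜}
  (hA : PosSemidef A)

/-- The positive semidefinite square root (the definition removed from Mathlib). -/
noncomputable def sqrt : Matrix n n 𝕜 :=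
  hA.1.eigenvectorUnitary.1 * diagonal ((↑) ∘ (√·) ∘ hA.1.eigenvalues) *
  (star hA.1.eigenvectorUnitary : Matrix n n 𝕜)

theorem posSemidef_sqrt : PosSemidef hA.sqrt := by
  unfold sqrt
  apply PosSemidef.mul_mul_conjTranspose_same
  refine posSemidef_diagonal_iff.mpr fun i ↦ ?_
  rw [Function.comp_apply, RCLike.nonneg_iff]
  constructor
  · simp only [RCLike.ofReal_re]
    exact Real.sqrt_nonneg _
  · simp only [RCLike.ofReal_im]

theorem sqrt_mul_self : hA.sqrt * hA.sqrt = A := by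
  let C : Matrix n n 𝕜 := hA.1.eigenvectorUnitary
  let E := diagonal ((↑) ∘ (√·) ∘ hA.1.eigenvalues : n → 𝕜)
  suffices C * (E * (star C * C) * E) * star C = A by
    change (C * E * star C) * (C * E * star C) = A
    simpa only [← mul_assoc] using this
  have : star C * C = 1 := Unitary.star_mul_self_of_mem hA.1.eigenvectorUnitary.2
  rw [this, mul_one]
  have : E * E = diagonal ((↑) ∘ hA.1.eigenvalues) := by
    rw [diagonal_mul_diagonal]
    congr! with v
    simp [← pow_two, ← RCLike.ofReal_pow, Real.sq_sqrt (hA.eigenvalues_nonneg v)]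
  rw [this]
  conv_rhs => rw [hA.1.spectral_theorem]
  simp [C, mul_assoc]

end Matrix.PosSemidef

namespace Matrix.PosSemidef

open scoped MatrixOrder in
theorem eq_sqrt_of_sq_eq {n : Type*} [Fintype n] [DecidableEq n] {A : Matrix n n ℂ}
    (hA : PosSemidef A) {B : Matrix n n ℂ} (hB : PosSemidef B) (hAB : A ^ 2 = B) :
    A = hB.sqrt := by
  have h1 : CFC.sqrt B = A := CFC.sqrt_unique (by rw [← hAB, pow_two]) hA.nonneg
  have h2 : CFC.sqrt B = hB.sqrt :=
    CFC.sqrt_unique hB.sqrt_mul_self hB.posSemidef_sqrt.nonneg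
  rw [← h1, h2]

end Matrix.PosSemidef

/-- The conjugate transpose of a Kronecker product is the Kronecker product of the
conjugate transposes. -/
theorem kron_conjTranspose {n m : ℕ} (A : Matrix (Fin n) (Fin n) ℂ)
    (B : Matrix (Fin m) (Fin m) ℂ) : (A ⊗ₖ B)ᴴ = Aᴴ ⊗ₖ Bᴴ := by
  ext ⟨i, j⟩ ⟨k, l⟩
  simp [Matrix.conjTranspose_apply, Matrix.kroneckerMap_apply]

/-- The Kronecker product of positive semidefinite matrices is positive semidefinite. -/
theorem kron_posSemidef {n m : ℕ} {A : Matrix (Fin n) (Fin n) ℂ}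
    {B : Matrix (Fin m) (Fin m) ℂ} (hA : A.PosSemidef) (hB : B.PosSemidef) :
    (A ⊗ₖ B).PosSemidef := by
  have h : A ⊗ₖ B = (hA.sqrt ⊗ₖ hB.sqrt)ᴴ * (hA.sqrt ⊗ₖ hB.sqrt) := by
    rw [kron_conjTranspose, hA.posSemidef_sqrt.isHermitian.eq,
      hB.posSemidef_sqrt.isHermitian.eq, ← Matrix.mul_kronecker_mul,
      hA.sqrt_mul_self, hB.sqrt_mul_self]
  rw [h]
  exact Matrix.posSemidef_conjTranspose_mul_self _

/-- Conjugating a positive semidefinite matrix by a Hermitian matrix yields a positive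
semidefinite matrix; in particular `√A · B · √A` is positive semidefinite. -/
theorem sandwich_posSemidef {k : Type*} [Fintype k] {M S : Matrix k k ℂ}
    (hM : M.PosSemidef) (hS : S.IsHermitian) : (S * M * S).PosSemidef := by
  have h := hM.mul_mul_conjTranspose_same S
  rwa [hS.eq] at h

/-- For positive semidefinite `A`, `B` (size `n`) and `C` (size `m`),
`√(√(A⊗C) · (B⊗C) · √(A⊗C)) = √(√A · B · √A) ⊗ C`. -/
theorem sqrt_sandwich_kron_right_factor {n m : ℕ}
    (A B : Matrix (Fin n) (Fin n) ℂ) (C : Matrix (Fin m) (Fin m) ℂ)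
    (hA : A.PosSemidef) (hB : B.PosSemidef) (hC : C.PosSemidef) :
    (sandwich_posSemidef (kron_posSemidef hB hC)
        (kron_posSemidef hA hC).posSemidef_sqrt.isHermitian).sqrt
      = (sandwich_posSemidef hB hA.posSemidef_sqrt.isHermitian).sqrt ⊗ₖ C := by
  have hSA := hA.posSemidef_sqrt
  have hSC := hC.posSemidef_sqrt
  have hkey : (kron_posSemidef hA hC).sqrt = hA.sqrt ⊗ₖ hC.sqrt :=
    ((kron_posSemidef hSA hSC).eq_sqrt_of_sq_eq (kron_posSemidef hA hC) (by
      rw [pow_two, ← Matrix.mul_kronecker_mul, hA.sqrt_mul_self, hC.sqrt_mul_self])).symm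
  have hCC : hC.sqrt * C * hC.sqrt = C * C := by
    calc hC.sqrt * C * hC.sqrt
        = hC.sqrt * (hC.sqrt * hC.sqrt) * hC.sqrt := by rw [hC.sqrt_mul_self]
      _ = (hC.sqrt * hC.sqrt) * (hC.sqrt * hC.sqrt) := by noncomm_ring
      _ = C * C := by rw [hC.sqrt_mul_self]
  have h2 : (kron_posSemidef hA hC).sqrt * (B ⊗ₖ C) * (kron_posSemidef hA hC).sqrt
      = (hA.sqrt * B * hA.sqrt) ⊗ₖ (C * C) := by
    rw [hkey, ← Matrix.mul_kronecker_mul, ← Matrix.mul_kronecker_mul, hCC]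
  refine (Matrix.PosSemidef.eq_sqrt_of_sq_eq
    (kron_posSemidef (sandwich_posSemidef hB hA.posSemidef_sqrt.isHermitian).posSemidef_sqrt hC)
    _ ?_).symm
  rw [pow_two, ← Matrix.mul_kronecker_mul,
    (sandwich_posSemidef hB hA.posSemidef_sqrt.isHermitian).sqrt_mul_self, h2]
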